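/- arXiv:1810.02266 — 2 statements merged into one kernel-verified Lean document; each statement's English description precedes it below -/
import Mathlib

section
/- Let 𝒳 be a measurable space, let P₀ and P₁ be probability measures on 𝒳, let α ∈ (0,1), and define μ = α·(P₀ ⊗ P₀) + (1 − α)·(P₁ ⊗ P₁) on 𝒳 × 𝒳 with common marginal m = α·P₀ + (1 − α)·P₁. If μ = m ⊗ m (i.e., the two coordinates are independent under μ), then P₀ = P₁. Equivalently: if consecutive observations of the stream are independent, then there is no concept drift. -/
open MeasureTheory
open scoped ENNReal

/-- Contrapositive form of "concept drift implies temporal dependence": if the joint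
law `μ = α•(P₀⊗P₀) + (1-α)•(P₁⊗P₁)` of two consecutive observations equals the
product `m ⊗ m` of its common marginal `m = α•P₀ + (1-α)•P₁` (i.e., the observations
are independent), then `P₀ = P₁`, i.e., there is no concept drift. -/
theorem independence_implies_no_drift
    {𝒳 : Type*} [MeasurableSpace 𝒳]
    (P₀ P₁ : Measure 𝒳) [IsProbabilityMeasure P₀] [IsProbabilityMeasure P₁]
    (α : ℝ≥0∞) (hα : 0 < α) (hα1 : α < 1)
    (μ : Measure (𝒳 × 𝒳)) (hμ : μ = α • (P₀.prod P₀) + (1 - α) • (P₁.prod P₁))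
    (m : Measure 𝒳) (hm : m = α • P₀ + (1 - α) • P₁)
    (hindep : μ = m.prod m) :
    P₀ = P₁ := by
  subst hm hμ
  ext s hs
  have h : (α • (P₀.prod P₀) + (1 - α) • (P₁.prod P₁)) (s ×ˢ s)
      = ((α • P₀ + (1 - α) • P₁).prod (α • P₀ + (1 - α) • P₁)) (s ×ˢ s) := by rw [hindep]
  set a := P₀ s with ha
  set b := P₁ s with hb
  simp only [Measure.prod_prod, Measure.add_apply, Measure.smul_apply, smul_eq_mul, ← ha,
    ← hb] at h
  -- finiteness
  have haf : a ≠ ∞ := (measure_lt_top P₀ s).ne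
  have hbf : b ≠ ∞ := (measure_lt_top P₁ s).ne
  have hαf : α ≠ ∞ := (hα1.trans (by norm_num)).ne
  have h1αf : (1 - α) ≠ ∞ := by
    exact (lt_of_le_of_lt tsub_le_self (by norm_num)).ne
  -- pass to reals
  set A := α.toReal with hA
  have hA1 : (1 - α).toReal = 1 - A := by
    rw [ENNReal.toReal_sub_of_le hα1.le (by norm_num)]
    simp [hA]
  have hA0 : 0 < A := ENNReal.toReal_pos hα.ne' hαf
  have hA1' : A < 1 := by
    have := (ENNReal.toReal_lt_toReal hαf (by norm_num : (1:ℝ≥0∞) ≠ ∞)).mpr hα1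
    simpa using this
  have hR : A * (a.toReal * a.toReal) + (1 - A) * (b.toReal * b.toReal)
      = (A * a.toReal + (1 - A) * b.toReal) * (A * a.toReal + (1 - A) * b.toReal) := by
    have := congrArg ENNReal.toReal h
    rw [ENNReal.toReal_add (by finiteness) (by finiteness)] at this
    simp only [ENNReal.toReal_mul, ENNReal.toReal_add (by finiteness : α * a ≠ ∞)
      (by finiteness : (1 - α) * b ≠ ∞), hA1] at this
    linarith [this]
  have hAA : 0 < A * (1 - A) := mul_pos hA0 (by linarith)
  have hz : A * (1 - A) * (a.toReal - b.toReal) ^ 2 = 0 := by nlinarith [hR]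
  have hab : a.toReal = b.toReal := by
    have := (mul_eq_zero.mp hz).resolve_left hAA.ne'
    have := pow_eq_zero_iff (n := 2) (by norm_num) |>.mp this
    linarith
  exact (ENNReal.toReal_eq_toReal_iff' haf hbf).mp hab
end

section
/- Let 𝒳 and 𝒴 be measurable spaces, let P₀ and P₁ be probability measures on 𝒳 with P₀ ≠ P₁, let α ∈ (0,1), and let μ = α·(P₀ ⊗ P₀) + (1 − α)·(P₁ ⊗ P₁) be the joint law of two consecutive inputs (X_{t−1}, X_t). Let κ : 𝒳 → 𝒴 be a Markov kernel giving the conditional law of the label Y_t given X_t (not depending on the concept). Let ν be the resulting joint law of (X_{t−1}, (X_t, Y_t)) on 𝒳 × (𝒳 × 𝒴), obtained by composing μ in its second coordinate with κ. Then ν is not equal to the product of its first marginal (the law of X_{t−1}) with its second marginal (the law of (X_t, Y_t)); i.e., X_{t−1} and (X_t, Y_t) are not independent. -/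
open MeasureTheory ProbabilityTheory
open scoped ENNReal

/-- Under concept drift, the previous input `X_{t-1}` and the current input/label pair
`(X_t, Y_t)` are not independent: with `(X_{t-1}, X_t)` having mixture joint law
`μ = α•(P₀⊗P₀) + (1-α)•(P₁⊗P₁)` (`P₀ ≠ P₁`) and the label generated from the current
input by a Markov kernel `κ`, the resulting joint law `ν` on `𝒳 × (𝒳 × 𝒴)` is not the
product of its two marginals. -/
theorem drift_label_joint_not_product
    {𝒳 𝒴 : Type*} [MeasurableSpace 𝒳] [MeasurableSpace 𝒴]
    (P₀ P₁ : Measure 𝒳) [IsProbabilityMeasure P₀] [IsProbabilityMeasure P₁]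
    (hne : P₀ ≠ P₁) (α : ℝ≥0∞) (hα : 0 < α) (hα1 : α < 1)
    (μ : Measure (𝒳 × 𝒳)) (hμ : μ = α • (P₀.prod P₀) + (1 - α) • (P₁.prod P₁))
    (κ : Kernel 𝒳 𝒴) [IsMarkovKernel κ]
    (ν : Measure (𝒳 × (𝒳 × 𝒴)))
    (hν : ν = (μ ⊗ₘ (κ.comap Prod.snd measurable_snd)).map MeasurableEquiv.prodAssoc) :
    ν ≠ ν.fst.prod ν.snd := by
  -- a set where the two concepts differ
  have hex : ∃ A : Set 𝒳, MeasurableSet A ∧ P₀ A ≠ P₁ A := by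
    by_contra h
    push_neg at h
    exact hne (Measure.ext fun s hs => h s hs)
  obtain ⟨A, hA, hAne⟩ := hex
  have hSF : SFinite μ := by rw [hμ]; infer_instance
  -- key projection identity
  have key : ∀ (S T : Set 𝒳), MeasurableSet S → MeasurableSet T →
      ν (S ×ˢ (T ×ˢ Set.univ)) = μ (S ×ˢ T) := by
    intro S T hS hT
    have hmeas : MeasurableSet (S ×ˢ (T ×ˢ (Set.univ : Set 𝒴))) :=
      hS.prod (hT.prod MeasurableSet.univ)
    rw [hν, Measure.map_apply (MeasurableEquiv.prodAssoc).measurable hmeas]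
    have hpre : (MeasurableEquiv.prodAssoc : (𝒳 × 𝒳) × 𝒴 ≃ᵐ 𝒳 × (𝒳 × 𝒴)) ⁻¹'
        (S ×ˢ (T ×ˢ (Set.univ : Set 𝒴))) = (S ×ˢ T) ×ˢ (Set.univ : Set 𝒴) := by
      ext ⟨⟨a, b⟩, c⟩
      simp [MeasurableEquiv.prodAssoc, Set.mem_prod, and_assoc]
    rw [hpre, Measure.compProd_apply_prod (hS.prod hT) MeasurableSet.univ]
    simp
  intro h
  -- evaluate both sides on A ×ˢ (A ×ˢ univ)
  have hfst : ν.fst A = μ (Set.univ ×ˢ A) := by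
    rw [Measure.fst_apply hA]
    have : (Prod.fst ⁻¹' A : Set (𝒳 × (𝒳 × 𝒴))) = A ×ˢ ((Set.univ : Set 𝒳) ×ˢ (Set.univ : Set 𝒴)) := by
      ext ⟨a, b, c⟩; simp
    rw [this, key A Set.univ hA MeasurableSet.univ]
    rw [hμ]
    simp
  have hsnd : ν.snd (A ×ˢ (Set.univ : Set 𝒴)) = μ (Set.univ ×ˢ A) := by
    rw [Measure.snd_apply (hA.prod MeasurableSet.univ)]
    have : (Prod.snd ⁻¹' (A ×ˢ (Set.univ : Set 𝒴)) : Set (𝒳 × (𝒳 × 𝒴)))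
        = (Set.univ : Set 𝒳) ×ˢ (A ×ˢ (Set.univ : Set 𝒴)) := by
      ext ⟨a, b, c⟩; simp
    rw [this, key Set.univ A MeasurableSet.univ hA]
  haveI hνfin : IsFiniteMeasure ν := by
    constructor
    have : (Set.univ : Set (𝒳 × (𝒳 × 𝒴))) = Set.univ ×ˢ ((Set.univ : Set 𝒳) ×ˢ (Set.univ : Set 𝒴)) := by
      simp
    rw [this, key Set.univ Set.univ MeasurableSet.univ MeasurableSet.univ, hμ]
    simp only [Measure.add_apply, Measure.smul_apply, smul_eq_mul, Measure.prod_prod,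
      measure_univ, mul_one]
    exact ENNReal.add_lt_top.mpr ⟨hα1.trans ENNReal.one_lt_top,
      lt_of_le_of_lt tsub_le_self ENNReal.one_lt_top⟩
  have heq : μ (A ×ˢ A) = μ (Set.univ ×ˢ A) * μ (Set.univ ×ˢ A) := by
    have h2 := congrArg (fun m : Measure (𝒳 × (𝒳 × 𝒴)) => m (A ×ˢ (A ×ˢ (Set.univ : Set 𝒴)))) h
    rw [key A A hA hA, Measure.prod_prod, hfst, hsnd] at h2
    exact h2
  -- turn into a real-number computation
  set a := (P₀ A).toReal with ha
  set b := (P₁ A).toReal with hb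
  set t := α.toReal with ht
  have hαle : α ≤ 1 := hα1.le
  have hαne : α ≠ ⊤ := (hα1.trans ENNReal.one_lt_top).ne
  have h1αne : (1 - α) ≠ ⊤ := by
    exact (lt_of_le_of_lt (tsub_le_self) ENNReal.one_lt_top).ne
  have hP₀fin : P₀ A ≠ ⊤ := (measure_lt_top _ _).ne
  have hP₁fin : P₁ A ≠ ⊤ := (measure_lt_top _ _).ne
  have hμAA : μ (A ×ˢ A) = α * (P₀ A * P₀ A) + (1 - α) * (P₁ A * P₁ A) := by
    rw [hμ]; simp [Measure.prod_prod, mul_comm]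
  have hμuA : μ (Set.univ ×ˢ A) = α * P₀ A + (1 - α) * P₁ A := by
    rw [hμ]; simp [Measure.prod_prod]
  rw [hμAA, hμuA] at heq
  have hfin1 : α * (P₀ A * P₀ A) ≠ ⊤ := ENNReal.mul_ne_top hαne (ENNReal.mul_ne_top hP₀fin hP₀fin)
  have hfin2 : (1 - α) * (P₁ A * P₁ A) ≠ ⊤ := ENNReal.mul_ne_top h1αne (ENNReal.mul_ne_top hP₁fin hP₁fin)
  have hfin3 : α * P₀ A ≠ ⊤ := ENNReal.mul_ne_top hαne hP₀fin
  have hfin4 : (1 - α) * P₁ A ≠ ⊤ := ENNReal.mul_ne_top h1αne hP₁fin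
  have hreal := congrArg ENNReal.toReal heq
  simp only [ENNReal.toReal_mul, ENNReal.toReal_add hfin1 hfin2,
    ENNReal.toReal_add hfin3 hfin4] at hreal
  have h1α : (1 - α).toReal = 1 - t := by
    rw [ENNReal.toReal_sub_of_le hαle ENNReal.one_ne_top]; simp [ht]
  rw [h1α] at hreal
  have htpos : 0 < t := ENNReal.toReal_pos hα.ne' hαne
  have htlt : t < 1 := by
    rw [ht]
    have := ENNReal.toReal_lt_toReal hαne ENNReal.one_ne_top
    simpa using this.mpr hα1
  have habne : a ≠ b := fun hab => hAne ((ENNReal.toReal_eq_toReal_iff' hP₀fin hP₁fin).mp hab)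
  have hsq : 0 < (a - b) ^ 2 := sq_pos_of_ne_zero (sub_ne_zero.mpr habne)
  nlinarith [mul_pos (mul_pos htpos (sub_pos.mpr htlt)) hsq]
end
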